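/- For every r ∈ (0,1), the representation (μ_r, ν_r) of the coherent distribution m_r = μ_r + ν_r is unique: if (μ̃, ν̃) ∈ R satisfies m_r = μ̃ + ν̃, then μ̃ = μ_r and ν̃ = ν_r. -/

import Mathlib

open MeasureTheory Set

noncomputable section

/-- The full tent map on `[0,1]`. -/
def T2 : ℝ → ℝ := fun x => 2 * min x (1 - x)

/-- The rescaled tent map `t_r` on `[0,r]`. -/
def tent (r : ℝ) : ℝ → ℝ := fun x => 2 * min x (r - x)

/-- The normalizing constant `c_r = -log(1-r)`. -/
def cr (r : ℝ) : ℝ := -Real.log (1 - r)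

/-- The measure `μ_r`, supported on the diagonal `Δ_r`. -/
def muR (r : ℝ) : Measure (ℝ × ℝ) :=
  ((volume.restrict (Icc (0:ℝ) r)).withDensity
      (fun s => ENNReal.ofReal ((cr r)⁻¹ * (s / (1 - s))))).map (fun s => (s, s))

/-- The measure `ν_r`, supported on the graph `Γ_r` of `t_r`. -/
def nuR (r : ℝ) : Measure (ℝ × ℝ) :=
  ((volume.restrict (Icc (0:ℝ) r)).withDensity
      (fun _ => ENNReal.ofReal (cr r)⁻¹)).map (fun s => (s, tent r s))

/-- The uniform probability distribution on `[0,r]`. -/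
def unif (r : ℝ) : Measure ℝ := (ENNReal.ofReal r)⁻¹ • volume.restrict (Icc (0:ℝ) r)

/-- The family `R`: pairs of nonnegative finite Borel measures on `[0,1]²`
with the marginal balance conditions. -/
structure MemR (μ ν : Measure (ℝ × ℝ)) : Prop where
  fin_mu : μ univ ≠ ⊤
  fin_nu : ν univ ≠ ⊤
  supp_mu : μ ((Icc (0:ℝ) 1 ×ˢ Icc (0:ℝ) 1)ᶜ) = 0
  supp_nu : ν ((Icc (0:ℝ) 1 ×ˢ Icc (0:ℝ) 1)ᶜ) = 0
  eq_x : ∀ A : Set ℝ, MeasurableSet A →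
    ∫⁻ x in A, ENNReal.ofReal (1 - x) ∂(μ.map Prod.fst) =
      ∫⁻ x in A, ENNReal.ofReal x ∂(ν.map Prod.fst)
  eq_y : ∀ B : Set ℝ, MeasurableSet B →
    ∫⁻ y in B, ENNReal.ofReal (1 - y) ∂(μ.map Prod.snd) =
      ∫⁻ y in B, ENNReal.ofReal y ∂(ν.map Prod.snd)

/-- A coherent distribution: a probability measure on `[0,1]²` of the form
`μ + ν` for some `(μ,ν) ∈ R`. -/
def Coherent (m : Measure (ℝ × ℝ)) : Prop :=
  IsProbabilityMeasure m ∧ ∃ μ ν : Measure (ℝ × ℝ), MemR μ ν ∧ m = μ + ν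

open scoped ENNReal

lemma half_inv : ENNReal.ofReal |(2:ℝ)⁻¹| = (2:ENNReal)⁻¹ := by
  rw [abs_of_pos (by norm_num : (0:ℝ) < (2:ℝ)⁻¹),
    ENNReal.ofReal_inv_of_pos (by norm_num)]
  norm_num

lemma neg_inv_abs : ENNReal.ofReal |(-2:ℝ)⁻¹| • (volume : MeasureTheory.Measure ℝ) = (2:ENNReal)⁻¹ • volume := by
  rw [show |(-2:ℝ)⁻¹| = |(2:ℝ)⁻¹| by norm_num, half_inv]


lemma measurable_tent (r : ℝ) : Measurable (tent r) := by
  have : Continuous (tent r) := by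
    unfold tent; fun_prop
  exact this.measurable

/-- generic: cancel a finite measure on the left of an addition -/
lemma Measure.add_left_cancel' {α : Type*} [MeasurableSpace α] {μ ν₁ ν₂ : Measure α}
    (hμ : ∀ s, μ s ≠ ⊤) (h : μ + ν₁ = μ + ν₂) : ν₁ = ν₂ := by
  ext s hs
  have h1 : μ s + ν₁ s = μ s + ν₂ s := by
    rw [← Measure.add_apply, ← Measure.add_apply, h]
  exact (ENNReal.add_right_inj (hμ s)).mp h1

/-- generic: a measure dominated by a finite measure with the same total mass equals it -/
lemma Measure.eq_of_le_of_univ_le {α : Type*} [MeasurableSpace α] {μ ν : Measure α}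
    (hle : μ ≤ ν) (hfin : ν univ ≠ ⊤) (huniv : ν univ ≤ μ univ) : μ = ν := by
  ext s hs
  refine le_antisymm (hle s) ?_
  have h1 : ν s + ν sᶜ = ν univ := measure_add_measure_compl hs
  have h2 : μ s + μ sᶜ = μ univ := measure_add_measure_compl hs
  have h3 : ν s + ν sᶜ ≤ μ s + ν sᶜ := by
    calc ν s + ν sᶜ = ν univ := h1
    _ ≤ μ univ := huniv
    _ = μ s + μ sᶜ := h2.symm
    _ ≤ μ s + ν sᶜ := by gcongr
  have hc : ν sᶜ ≠ ⊤ := fun ht => hfin (eq_top_iff.2 (ht ▸ measure_mono (subset_univ sᶜ)))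
  exact (ENNReal.add_le_add_iff_right hc).mp h3

/-- The tent map preserves Lebesgue measure on `[0,r]`. -/
lemma tent_map_volume {r : ℝ} (hr : 0 < r) :
    Measure.map (tent r) (volume.restrict (Icc 0 r)) = volume.restrict (Icc 0 r) := by
  have hsplit : (Icc (0:ℝ) r) = Ico 0 (r/2) ∪ Icc (r/2) r := by
    rw [Ico_union_Icc_eq_Icc (by linarith) (by linarith)]
  have hdisj : Disjoint (Ico (0:ℝ) (r/2)) (Icc (r/2) r) := by
    rw [Set.disjoint_left]; rintro x ⟨_, h1⟩ ⟨h2, _⟩; linarith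
  have hres : volume.restrict (Icc (0:ℝ) r)
      = volume.restrict (Ico 0 (r/2)) + volume.restrict (Icc (r/2) r) := by
    rw [hsplit, Measure.restrict_union hdisj measurableSet_Icc]
  -- left branch
  have hleft : Measure.map (tent r) (volume.restrict (Ico 0 (r/2)))
      = ((2:ℝ≥0∞)⁻¹) • volume.restrict (Ico 0 r) := by
    have hcongr : tent r =ᵐ[volume.restrict (Ico 0 (r/2))] (fun x => 2 * x) := by
      rw [Filter.EventuallyEq, ae_restrict_iff' measurableSet_Ico]
      filter_upwards with x hx
      have hx' : 0 ≤ x ∧ x < r/2 := by simpa [mem_Ico] using hx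
      have : min x (r - x) = x := min_eq_left (by linarith [hx'.1, hx'.2])
      simp [tent, this]
    rw [Measure.map_congr hcongr]
    have hpre : (fun x : ℝ => 2 * x) ⁻¹' (Ico 0 r) = Ico 0 (r/2) := by
      ext x; simp only [mem_preimage, mem_Ico]
      constructor <;> rintro ⟨h1, h2⟩ <;> constructor <;> linarith
    rw [← hpre, ← Measure.restrict_map (by fun_prop) measurableSet_Ico,
      Real.map_volume_mul_left (two_ne_zero)]
    rw [Measure.restrict_smul, half_inv]
  -- right branch
  have hright : Measure.map (tent r) (volume.restrict (Icc (r/2) r))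
      = ((2:ℝ≥0∞)⁻¹) • volume.restrict (Icc 0 r) := by
    have hcongr : tent r =ᵐ[volume.restrict (Icc (r/2) r)] (fun x => 2*r + (-2) * x) := by
      rw [Filter.EventuallyEq, ae_restrict_iff' measurableSet_Icc]
      filter_upwards with x hx
      have hx' : r/2 ≤ x ∧ x ≤ r := by simpa [mem_Icc] using hx
      have : min x (r - x) = r - x := min_eq_right (by linarith [hx'.1, hx'.2])
      simp only [tent, this]; ring
    rw [Measure.map_congr hcongr]
    have hpre : (fun x : ℝ => 2*r + (-2) * x) ⁻¹' (Icc 0 r) = Icc (r/2) r := by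
      ext x; simp only [mem_preimage, mem_Icc]
      constructor <;> rintro ⟨h1, h2⟩ <;> constructor <;> linarith
    have hmapf : Measure.map (fun x : ℝ => 2*r + (-2) * x) volume
        = ((2:ℝ≥0∞)⁻¹) • volume := by
      have : (fun x : ℝ => 2*r + (-2) * x) = (fun x : ℝ => 2*r + x) ∘ (fun x : ℝ => (-2) * x) := rfl
      rw [this, ← Measure.map_map (by fun_prop) (by fun_prop),
        Real.map_volume_mul_left (by norm_num : (-2:ℝ) ≠ 0),
        Measure.map_smul, (measurePreserving_add_left volume (2*r)).map_eq, neg_inv_abs]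
    rw [← hpre, ← Measure.restrict_map (by fun_prop) measurableSet_Icc, hmapf,
      Measure.restrict_smul]
  conv_lhs => rw [hres]
  rw [Measure.map_add _ _ (measurable_tent r), hleft, hright,
    Measure.restrict_congr_set Ico_ae_eq_Icc, ← add_smul,
    ENNReal.inv_two_add_inv_two, one_smul]

lemma tent_fold {r : ℝ} (hr : 0 < r) (h2r : (0:ℝ) < 2*r) (x : ℝ) :
    |toIocMod h2r (-r) (2*x)| = tent r |toIocMod h2r (-r) x| := by
  set u := toIocMod h2r (-r) x with hu_def
  have hu : u ∈ Ioc (-r) (-r + 2*r) := toIocMod_mem_Ioc h2r (-r) x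
  obtain ⟨hu1, hu2⟩ := hu
  have hu2' : u ≤ r := by linarith
  set k := toIocDiv h2r (-r) x with hk_def
  have hxu : u = x - k • (2*r) := rfl
  have key : toIocMod h2r (-r) (2*x) = toIocMod h2r (-r) (2*u) := by
    have h2x : 2*x = 2*u + (2*k) • (2*r) := by
      rw [hxu]; push_cast [zsmul_eq_mul]; ring
    rw [h2x, toIocMod_add_zsmul]
  rcases le_or_gt u (-(r/2)) with hc | hc
  · -- u ∈ (-r, -r/2]
    have hv : toIocMod h2r (-r) (2*u) = 2*u + 2*r :=
      (toIocMod_eq_iff h2r).mpr ⟨Set.mem_Ioc.mpr ⟨by linarith, by linarith⟩,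
        ⟨-1, by push_cast [zsmul_eq_mul]; ring⟩⟩
    have habs_u : |u| = -u := abs_of_nonpos (by linarith)
    rw [key, hv, abs_of_nonneg (by linarith : (0:ℝ) ≤ 2*u + 2*r), habs_u]
    simp only [tent]
    rw [min_eq_right (by linarith)]; ring
  rcases le_or_gt u (r/2) with hc2 | hc2
  · -- u ∈ (-r/2, r/2]
    have hv : toIocMod h2r (-r) (2*u) = 2*u :=
      (toIocMod_eq_self h2r).mpr (Set.mem_Ioc.mpr ⟨by linarith, by linarith⟩)
    have hminle : |u| ≤ r - |u| := by
      rcases abs_cases u with ⟨h, _⟩ | ⟨h, _⟩ <;> rw [h] <;> linarith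
    rw [key, hv, abs_mul, abs_of_nonneg (by norm_num : (0:ℝ) ≤ 2)]
    simp only [tent]
    rw [min_eq_left hminle]
  · -- u ∈ (r/2, r]
    have hv : toIocMod h2r (-r) (2*u) = 2*u - 2*r :=
      (toIocMod_eq_iff h2r).mpr ⟨Set.mem_Ioc.mpr ⟨by linarith, by linarith⟩,
        ⟨1, by push_cast [zsmul_eq_mul]; ring⟩⟩
    have habs_u : |u| = u := abs_of_nonneg (by linarith)
    rw [key, hv, abs_of_nonpos (by linarith : 2*u - 2*r ≤ 0), habs_u]
    simp only [tent]
    rw [min_eq_right (by linarith)]; ring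

lemma tent_ergodic {r : ℝ} (hr : 0 < r) : Ergodic (tent r) (volume.restrict (Icc 0 r)) := by
  have h2r : (0:ℝ) < 2*r := by linarith
  haveI F : Fact ((0:ℝ) < 2*r) := ⟨h2r⟩
  set q : AddCircle (2*r) → ℝ :=
    fun θ => |((AddCircle.measurableEquivIoc (2*r) (-r) θ : Ioc (-r) (-r + 2*r)) : ℝ)| with hq_def
  have hq_meas : Measurable q :=
    (measurable_subtype_coe.comp (AddCircle.measurableEquivIoc (2*r) (-r)).measurable).abs
  have hq_mk : ∀ x : ℝ, q (x : AddCircle (2*r)) = |toIocMod h2r (-r) x| := by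
    intro x
    have : (AddCircle.measurableEquivIoc (2*r) (-r) (x : AddCircle (2*r)) : Ioc (-r) (-r+2*r))
        = ⟨toIocMod h2r (-r) x, toIocMod_mem_Ioc h2r (-r) x⟩ := by
      apply QuotientAddGroup.equivIocMod_coe
    rw [hq_def]; simp only [this]
  have hsemi : Function.Semiconj q (fun θ : AddCircle (2*r) => (2:ℕ) • θ) (tent r) := by
    intro θ
    induction θ using QuotientAddGroup.induction_on with
    | H x =>
      have h2x : ((2:ℕ) • (x : AddCircle (2*r))) = ((2 * x : ℝ) : AddCircle (2*r)) := by
        rw [show (2*x : ℝ) = x + x by ring, two_nsmul]; rfl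
      simp only [h2x, hq_mk]
      exact tent_fold hr h2r x
  have hD : Ergodic (fun θ : AddCircle (2*r) => (2:ℕ) • θ) volume :=
    AddCircle.ergodic_nsmul (by norm_num)
  have hpre : PreErgodic (tent r) (Measure.map q volume) :=
    MeasurePreserving.preErgodic_of_preErgodic_semiconj ⟨hq_meas, rfl⟩ hD.toPreErgodic hsemi
  have hmapq : Measure.map q volume = (2:ℝ≥0∞) • volume.restrict (Icc 0 r) := by
    have hmk := (AddCircle.measurePreserving_mk (2*r) (-r)).map_eq
    rw [← hmk, Measure.map_map hq_meas (AddCircle.measurable_mk')]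
    have hIoc : Ioc (-r) (-r + 2*r) = Ioc (-r) r := by rw [show -r + 2*r = r by ring]
    have hcongr : (q ∘ (QuotientAddGroup.mk : ℝ → AddCircle (2*r)))
        =ᵐ[volume.restrict (Ioc (-r) (-r+2*r))] (fun x => |x|) := by
      rw [Filter.EventuallyEq, ae_restrict_iff' measurableSet_Ioc]
      filter_upwards with x hx
      have : q (x : AddCircle (2*r)) = |toIocMod h2r (-r) x| := hq_mk x
      simp only [Function.comp_apply]
      rw [this, (toIocMod_eq_self h2r).mpr hx]
    rw [Measure.map_congr hcongr, hIoc]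
    have hsplit : Ioc (-r) r = Ioc (-r) 0 ∪ Ioc 0 r := (Ioc_union_Ioc_eq_Ioc (by linarith) (by linarith)).symm
    have hdisj : Disjoint (Ioc (-r) (0:ℝ)) (Ioc 0 r) := by
      rw [Set.disjoint_left]; rintro x ⟨_, h1⟩ ⟨h2, _⟩; linarith
    rw [hsplit, Measure.restrict_union hdisj measurableSet_Ioc,
      Measure.map_add _ _ (by fun_prop : Measurable fun x : ℝ => |x|)]
    have hneg : Measure.map (fun x : ℝ => |x|) (volume.restrict (Ioc (-r) 0))
        = volume.restrict (Ico 0 r) := by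
      have hcongr2 : (fun x : ℝ => |x|) =ᵐ[volume.restrict (Ioc (-r) 0)] Neg.neg := by
        rw [Filter.EventuallyEq, ae_restrict_iff' measurableSet_Ioc]
        filter_upwards with x hx
        exact abs_of_nonpos hx.2
      rw [Measure.map_congr hcongr2]
      have hpre2 : (Neg.neg : ℝ → ℝ) ⁻¹' (Ico 0 r) = Ioc (-r) 0 := by
        ext x; simp only [mem_preimage, mem_Ico, mem_Ioc]
        constructor <;> rintro ⟨h1, h2⟩ <;> constructor <;> linarith
      rw [← hpre2, ← Measure.restrict_map measurable_neg measurableSet_Ico,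
        Measure.map_neg_eq_self (volume : Measure ℝ)]
    have hpos : Measure.map (fun x : ℝ => |x|) (volume.restrict (Ioc 0 r))
        = volume.restrict (Ioc 0 r) := by
      have hcongr3 : (fun x : ℝ => |x|) =ᵐ[volume.restrict (Ioc 0 r)] id := by
        rw [Filter.EventuallyEq, ae_restrict_iff' measurableSet_Ioc]
        filter_upwards with x hx
        exact abs_of_nonneg hx.1.le
      rw [Measure.map_congr hcongr3, Measure.map_id]
    rw [hneg, hpos, Measure.restrict_congr_set Ico_ae_eq_Icc,
      Measure.restrict_congr_set Ioc_ae_eq_Icc, ← two_smul ℝ≥0∞]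
  rw [hmapq] at hpre
  have hpre2 : PreErgodic (tent r) ((2:ℝ≥0∞)⁻¹ • (2:ℝ≥0∞) • volume.restrict (Icc 0 r)) :=
    hpre.smul_measure _
  rw [smul_smul, ENNReal.inv_mul_cancel two_ne_zero ENNReal.ofNat_ne_top, one_smul] at hpre2
  exact ⟨⟨measurable_tent r, tent_map_volume hr⟩, hpre2⟩

lemma cr_pos {r : ℝ} (hr : r ∈ Ioo (0:ℝ) 1) : 0 < cr r := by
  have := Real.log_neg (by linarith [hr.2] : (0:ℝ) < 1 - r) (by linarith [hr.1] : (1:ℝ) - r < 1)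
  unfold cr; linarith

lemma invariant_null {r : ℝ} (hr : r ∈ Ioo (0:ℝ) 1) (σ : Measure ℝ) [IsFiniteMeasure σ]
    (hinv : Measure.map (tent r) σ = σ)
    (hleL : σ ≤ (volume.restrict (Icc 0 r)).withDensity (fun _ => ENNReal.ofReal (cr r)⁻¹))
    (hleD : σ ≤ (volume.restrict (Icc 0 r)).withDensity
        (fun s => ENNReal.ofReal ((cr r)⁻¹ * (s / (1 - s))))) :
    σ = 0 := by
  obtain ⟨hr0, hr1⟩ := hr
  have hcpos : 0 < cr r := cr_pos ⟨hr0, hr1⟩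
  set μL : Measure ℝ := volume.restrict (Icc 0 r) with hμL_def
  haveI : IsFiniteMeasure μL := by
    constructor
    rw [hμL_def, Measure.restrict_apply_univ, Real.volume_Icc]
    exact ENNReal.ofReal_lt_top
  have habs : σ ≪ μL := by
    refine Measure.AbsolutelyContinuous.mk (fun A hA h0 => ?_)
    refine le_antisymm ?_ zero_le
    calc σ A ≤ (μL.withDensity (fun _ => ENNReal.ofReal (cr r)⁻¹)) A :=
          Measure.le_iff.mp hleL A hA
    _ = 0 := (withDensity_absolutelyContinuous μL _) h0
  set h : ℝ → ℝ≥0∞ := σ.rnDeriv μL with hh_def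
  have h_meas : Measurable h := Measure.measurable_rnDeriv σ μL
  have hσ : μL.withDensity h = σ := Measure.withDensity_rnDeriv_eq σ μL habs
  have hμLinv : Measure.map (tent r) μL = μL := tent_map_volume hr0
  set m_ : ℝ≥0∞ → Measure ℝ := fun c => μL.withDensity (fun x => min (h x) c) with hm_def
  have hm_le_σ : ∀ c, m_ c ≤ σ := fun c =>
    hσ ▸ withDensity_mono (Filter.Eventually.of_forall (fun x => min_le_left _ _))
  have hm_le_c : ∀ c, m_ c ≤ c • μL := fun c => by
    rw [hm_def, ← withDensity_const]
    exact withDensity_mono (Filter.Eventually.of_forall (fun x => min_le_right _ _))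
  have hm_fin : ∀ c, IsFiniteMeasure (m_ c) := fun c =>
    isFiniteMeasure_of_le σ (hm_le_σ c)
  have hm_apply : ∀ (c : ℝ≥0∞) (A : Set ℝ), MeasurableSet A →
      m_ c A = ∫⁻ x in A, min (h x) c ∂μL :=
    fun c A hA => withDensity_apply _ hA
  have hm_inv : ∀ c, Measure.map (tent r) (m_ c) = m_ c := by
    intro c
    haveI : IsFiniteMeasure (m_ c) := hm_fin c
    refine Measure.eq_of_le_of_univ_le ?_ (measure_ne_top _ _) ?_
    · rw [Measure.le_iff]
      intro A hA
      set S : Set ℝ := {x | h x ≤ c} with hS_def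
      have hS : MeasurableSet S := measurableSet_le h_meas measurable_const
      have key1 : (Measure.map (tent r) (m_ c)) (A ∩ S) ≤ m_ c (A ∩ S) := by
        calc (Measure.map (tent r) (m_ c)) (A ∩ S)
            ≤ (Measure.map (tent r) σ) (A ∩ S) :=
              Measure.le_iff.mp (Measure.map_mono (hm_le_σ c) (measurable_tent r)) _ (hA.inter hS)
          _ = σ (A ∩ S) := by rw [hinv]
          _ = ∫⁻ x in A ∩ S, h x ∂μL := by rw [← hσ, withDensity_apply _ (hA.inter hS)]
          _ = ∫⁻ x in A ∩ S, min (h x) c ∂μL := by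
              refine setLIntegral_congr_fun (hA.inter hS) ?_
              intro x hx; exact (min_eq_left hx.2).symm
          _ = m_ c (A ∩ S) := (hm_apply c _ (hA.inter hS)).symm
      have key2 : (Measure.map (tent r) (m_ c)) (A \ S) ≤ m_ c (A \ S) := by
        calc (Measure.map (tent r) (m_ c)) (A \ S)
            ≤ (Measure.map (tent r) (c • μL)) (A \ S) :=
              Measure.le_iff.mp (Measure.map_mono (hm_le_c c) (measurable_tent r)) _ (hA.diff hS)
          _ = (c • μL) (A \ S) := by rw [Measure.map_smul, hμLinv]
          _ = ∫⁻ _x in A \ S, c ∂μL := by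
              rw [Measure.smul_apply, smul_eq_mul, setLIntegral_const]
          _ = ∫⁻ x in A \ S, min (h x) c ∂μL := by
              refine setLIntegral_congr_fun (hA.diff hS) ?_
              intro x hx; exact (min_eq_right (le_of_not_ge hx.2)).symm
          _ = m_ c (A \ S) := (hm_apply c _ (hA.diff hS)).symm
      calc (Measure.map (tent r) (m_ c)) A
          = (Measure.map (tent r) (m_ c)) (A ∩ S) + (Measure.map (tent r) (m_ c)) (A \ S) :=
            (measure_inter_add_diff A hS).symm
        _ ≤ m_ c (A ∩ S) + m_ c (A \ S) := add_le_add key1 key2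
        _ = m_ c A := measure_inter_add_diff A hS
    · rw [Measure.map_apply (measurable_tent r) MeasurableSet.univ, preimage_univ]
  have levelnull : ∀ t : ℝ, 0 < t → μL {x | ENNReal.ofReal t ≤ h x} = 0 := by
    intro t ht
    set c : ℝ≥0∞ := ENNReal.ofReal (t/2) with hc_def
    set c' : ℝ≥0∞ := ENNReal.ofReal t with hc'_def
    have hcc : c ≤ c' := ENNReal.ofReal_le_ofReal (by linarith)
    have hc'top : c' ≠ ⊤ := ENNReal.ofReal_ne_top
    have hctop : c ≠ ⊤ := ENNReal.ofReal_ne_top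
    set d : ℝ≥0∞ := c' - c with hd_def
    have hd_eq : d = ENNReal.ofReal (t/2) := by
      rw [hd_def, hc'_def, hc_def, ← ENNReal.ofReal_sub _ (by linarith),
        show t - t/2 = t/2 by ring]
    have hd0 : d ≠ 0 := by
      rw [hd_eq, ne_eq, ENNReal.ofReal_eq_zero, not_le]; linarith
    have hdtop : d ≠ ⊤ := by rw [hd_eq]; exact ENNReal.ofReal_ne_top
    set A : Set ℝ := {x | c' ≤ h x} with hA_def
    have hA : MeasurableSet A := measurableSet_le measurable_const h_meas
    have hTA : MeasurableSet (tent r ⁻¹' A) := hA.preimage (measurable_tent r)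
    have hMA : μL (tent r ⁻¹' A) = μL A := by
      conv_rhs => rw [← hμLinv]
      rw [Measure.map_apply (measurable_tent r) hA]
    have hMfin : μL A ≠ ⊤ := measure_ne_top _ _
    have hmA : ∀ e : ℝ≥0∞, e ≤ c' → m_ e A = e * μL A := by
      intro e he
      rw [hm_apply e A hA,
        setLIntegral_congr_fun hA
          (fun x hx => min_eq_right (le_trans he hx)),
        setLIntegral_const]
    have hmTA : ∀ e : ℝ≥0∞, m_ e (tent r ⁻¹' A) = m_ e A := by
      intro e
      conv_rhs => rw [← hm_inv e]
      rw [Measure.map_apply (measurable_tent r) hA]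
    have hint' : ∫⁻ x in tent r ⁻¹' A, min (h x) c' ∂μL = c' * μL A := by
      rw [← hm_apply c' _ hTA, hmTA, hmA c' le_rfl]
    have hint : ∫⁻ x in tent r ⁻¹' A, min (h x) c ∂μL = c * μL A := by
      rw [← hm_apply c _ hTA, hmTA, hmA c hcc]
    set w : ℝ → ℝ≥0∞ := fun x => min (h x) c' - min (h x) c with hw_def
    have hw_meas : Measurable w := (h_meas.min measurable_const).sub (h_meas.min measurable_const)
    have hw_le : ∀ x, w x ≤ d := by
      intro x
      simp only [hw_def, hd_def]
      rcases le_total (h x) c with hle | hle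
      · simp only [min_eq_left hle, min_eq_left (le_trans hle hcc), tsub_self]
        exact zero_le
      · rw [min_eq_right hle]
        exact tsub_le_tsub (min_le_right _ _) le_rfl
    have hmono : (fun x => min (h x) c) ≤ᵐ[μL.restrict (tent r ⁻¹' A)] (fun x => min (h x) c') :=
      Filter.Eventually.of_forall (fun x => min_le_min le_rfl hcc)
    have hfin2 : ∫⁻ x in tent r ⁻¹' A, min (h x) c ∂μL ≠ ⊤ := by
      rw [hint]; exact ENNReal.mul_ne_top hctop hMfin
    have hw_int : ∫⁻ x in tent r ⁻¹' A, w x ∂μL = d * μL A := by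
      simp only [hw_def]
      rw [lintegral_sub (h_meas.min measurable_const) hfin2 hmono, hint', hint, hd_def,
        ENNReal.sub_mul (fun _ _ => hMfin)]
    have hd_int : ∫⁻ x in tent r ⁻¹' A, (d - w x) ∂μL = 0 := by
      have hconst : ∫⁻ _x in tent r ⁻¹' A, d ∂μL = d * μL A := by
        rw [setLIntegral_const, hMA]
      rw [lintegral_sub hw_meas (by rw [hw_int]; exact ENNReal.mul_ne_top hdtop hMfin)
        (Filter.Eventually.of_forall hw_le), hw_int, hconst, tsub_self]
    have hae_w : ∀ᵐ x ∂(μL.restrict (tent r ⁻¹' A)), d - w x = 0 :=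
      (lintegral_eq_zero_iff (measurable_const.sub hw_meas)).mp hd_int
    have hae_mem : ∀ᵐ x ∂(μL.restrict (tent r ⁻¹' A)), x ∈ A := by
      filter_upwards [hae_w] with x hx
      have hwd : w x = d := le_antisymm (hw_le x) (tsub_eq_zero_iff_le.mp hx)
      by_contra hxA
      have hlt : h x < c' := lt_of_not_ge hxA
      simp only [hw_def, min_eq_left hlt.le] at hwd
      rcases le_total (h x) c with hle | hle
      · rw [min_eq_left hle, tsub_self] at hwd
        exact hd0 hwd.symm
      · rw [min_eq_right hle] at hwd
        have heq : h x = d + c := by rw [← tsub_add_cancel_of_le hle, hwd]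
        rw [hd_def, tsub_add_cancel_of_le hcc] at heq
        exact absurd heq (ne_of_lt hlt)
    have hnull1 : μL (tent r ⁻¹' A \ A) = 0 := by
      have h0 : (μL.restrict (tent r ⁻¹' A)) Aᶜ = 0 := by
        rw [ae_iff] at hae_mem
        exact hae_mem
      rw [diff_eq, inter_comm, ← Measure.restrict_apply hA.compl]
      exact h0
    have hnull2 : μL (A \ tent r ⁻¹' A) = 0 := by
      have e1 : μL (tent r ⁻¹' A ∩ A) + μL (tent r ⁻¹' A \ A) = μL (tent r ⁻¹' A) :=
        measure_inter_add_diff _ hA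
      rw [hnull1, add_zero, hMA] at e1
      have e2 : μL (A ∩ tent r ⁻¹' A) + μL (A \ tent r ⁻¹' A) = μL A :=
        measure_inter_add_diff _ hTA
      rw [inter_comm, e1] at e2
      have e3 : μL A + μL (A \ tent r ⁻¹' A) = μL A + 0 := by rw [add_zero]; exact e2
      exact (ENNReal.add_right_inj hMfin).mp e3
    have hae_set : tent r ⁻¹' A =ᵐ[μL] A := ae_eq_set.mpr ⟨hnull1, hnull2⟩
    rcases (tent_ergodic hr0).quasiErgodic.ae_empty_or_univ₀ hA.nullMeasurableSet hae_set with
      hemp | huniv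
    · exact ae_eq_empty.mp hemp
    · exfalso
      have hAc : μL Aᶜ = 0 := by rwa [← ae_eq_univ]
      set a : ℝ := min r ((1 - r) * cr r * t / 2) with ha_def
      have ha_pos : 0 < a := lt_min hr0 (div_pos (mul_pos (mul_pos (by linarith : (0:ℝ) < 1-r) hcpos) ht) two_pos)
      have ha_le_r : a ≤ r := min_le_left _ _
      have h4 : μL (Icc 0 a) = ENNReal.ofReal a := by
        rw [hμL_def, Measure.restrict_apply measurableSet_Icc, Icc_inter_Icc, Real.volume_Icc]
        simp [min_eq_left ha_le_r]
      have hlow : ENNReal.ofReal t * ENNReal.ofReal a ≤ σ (Icc 0 a) := by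
        have h1 : m_ c' (Icc 0 a) = ∫⁻ x in Icc 0 a, min (h x) c' ∂μL :=
          hm_apply _ _ measurableSet_Icc
        have h2 : ∫⁻ x in Icc 0 a, min (h x) c' ∂μL = ∫⁻ _x in Icc 0 a, c' ∂μL := by
          apply lintegral_congr_ae
          have hmem : ∀ᵐ x ∂(μL.restrict (Icc 0 a)), x ∈ A := ae_restrict_of_ae (by
            rw [ae_iff]; exact hAc)
          filter_upwards [hmem] with x hx
          exact min_eq_right hx
        calc ENNReal.ofReal t * ENNReal.ofReal a = c' * μL (Icc 0 a) := by rw [h4, hc'_def]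
        _ = m_ c' (Icc 0 a) := by rw [h1, h2, setLIntegral_const]
        _ ≤ σ (Icc 0 a) := Measure.le_iff.mp (hm_le_σ c') _ measurableSet_Icc
      have hup : σ (Icc 0 a) ≤ ENNReal.ofReal ((cr r)⁻¹ * (a / (1 - r))) * ENNReal.ofReal a := by
        calc σ (Icc 0 a)
            ≤ (μL.withDensity (fun s => ENNReal.ofReal ((cr r)⁻¹ * (s / (1 - s))))) (Icc 0 a) :=
              Measure.le_iff.mp hleD _ measurableSet_Icc
          _ = ∫⁻ x in Icc 0 a, ENNReal.ofReal ((cr r)⁻¹ * (x / (1 - x))) ∂μL :=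
              withDensity_apply _ measurableSet_Icc
          _ ≤ ∫⁻ _x in Icc 0 a, ENNReal.ofReal ((cr r)⁻¹ * (a / (1 - r))) ∂μL := by
              apply lintegral_mono_ae
              rw [ae_restrict_iff' measurableSet_Icc]
              filter_upwards with x hx
              apply ENNReal.ofReal_le_ofReal
              apply mul_le_mul_of_nonneg_left _ (inv_nonneg.mpr hcpos.le)
              exact div_le_div₀ ha_pos.le hx.2 (by linarith) (by linarith [hx.2, ha_le_r])
          _ = ENNReal.ofReal ((cr r)⁻¹ * (a / (1 - r))) * ENNReal.ofReal a := by
              rw [setLIntegral_const, h4]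
      have hcomb := le_trans hlow hup
      have ha_ne : (ENNReal.ofReal a) ≠ 0 := (ENNReal.ofReal_pos.mpr ha_pos).ne'
      have hcancel : ENNReal.ofReal t ≤ ENNReal.ofReal ((cr r)⁻¹ * (a / (1 - r))) :=
        (ENNReal.mul_le_mul_iff_left ha_ne ENNReal.ofReal_ne_top).mp hcomb
      have hreal : t ≤ (cr r)⁻¹ * (a / (1 - r)) := by
        by_contra hcon
        push_neg at hcon
        have := ENNReal.ofReal_le_ofReal hcon.le
        have h5 : ENNReal.ofReal t = ENNReal.ofReal ((cr r)⁻¹ * (a / (1 - r))) :=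
          le_antisymm hcancel this
        rw [ENNReal.ofReal_eq_ofReal_iff (by linarith) (mul_nonneg (inv_nonneg.mpr hcpos.le) (div_nonneg ha_pos.le (by linarith)))] at h5
        linarith
      have hbound : (cr r)⁻¹ * (a / (1 - r)) ≤ t/2 := by
        have ha2 : a ≤ (1 - r) * cr r * t / 2 := min_le_right _ _
        have h1r : (0:ℝ) < 1 - r := by linarith
        rw [mul_div_assoc']
        rw [div_le_iff₀ h1r]
        calc (cr r)⁻¹ * a ≤ (cr r)⁻¹ * ((1 - r) * cr r * t / 2) := by
              apply mul_le_mul_of_nonneg_left ha2 (inv_nonneg.mpr hcpos.le)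
          _ = t / 2 * (1 - r) := by field_simp
      linarith
  have hnull_h : μL {x | h x ≠ 0} = 0 := by
    have hsub : {x | h x ≠ 0} ⊆ ⋃ n : ℕ, {x | ENNReal.ofReal (1/(n+1)) ≤ h x} := by
      intro x hx
      rcases eq_or_ne (h x) ⊤ with htop | htop
      · exact mem_iUnion.mpr ⟨0, by rw [mem_setOf_eq, htop]; exact le_top⟩
      · have hpos : 0 < (h x).toReal := ENNReal.toReal_pos hx htop
        obtain ⟨n, hn⟩ := exists_nat_one_div_lt hpos
        refine mem_iUnion.mpr ⟨n, ?_⟩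
        rw [mem_setOf_eq, ← ENNReal.ofReal_toReal htop]
        exact ENNReal.ofReal_le_ofReal hn.le
    exact measure_mono_null hsub (measure_iUnion_null (fun n => levelnull _ (by positivity)))
  have hh0 : h =ᵐ[μL] 0 := by
    rw [Filter.EventuallyEq, ae_iff]
    simpa using hnull_h
  rw [← hσ, withDensity_congr_ae hh0, withDensity_zero]

/-- The first-coordinate density measure of `muR`. -/
def rhoD (r : ℝ) : Measure ℝ :=
  (volume.restrict (Icc (0:ℝ) r)).withDensity
    (fun s => ENNReal.ofReal ((cr r)⁻¹ * (s / (1 - s))))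

/-- The first-coordinate density measure of `nuR`. -/
def rhoG (r : ℝ) : Measure ℝ :=
  (volume.restrict (Icc (0:ℝ) r)).withDensity (fun _ => ENNReal.ofReal (cr r)⁻¹)

lemma muR_eq (r : ℝ) : muR r = (rhoD r).map (fun s => (s, s)) := rfl
lemma nuR_eq (r : ℝ) : nuR r = (rhoG r).map (fun s => (s, tent r s)) := rfl

lemma measurable_densD (r : ℝ) :
    Measurable (fun s : ℝ => ENNReal.ofReal ((cr r)⁻¹ * (s / (1 - s)))) :=
  ENNReal.measurable_ofReal.comp
    (measurable_const.mul (measurable_id.div (measurable_const.sub measurable_id)))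

lemma measurable_diagR : Measurable (fun s : ℝ => (s, s)) := measurable_id.prodMk measurable_id
lemma measurable_graph (r : ℝ) : Measurable (fun s : ℝ => (s, tent r s)) :=
  measurable_id.prodMk (measurable_tent r)

lemma fst_muR (r : ℝ) : (muR r).map Prod.fst = rhoD r := by
  rw [muR_eq, Measure.map_map measurable_fst measurable_diagR,
    show (Prod.fst ∘ fun s : ℝ => (s, s)) = id from rfl, Measure.map_id]

lemma snd_muR (r : ℝ) : (muR r).map Prod.snd = rhoD r := by
  rw [muR_eq, Measure.map_map measurable_snd measurable_diagR,
    show (Prod.snd ∘ fun s : ℝ => (s, s)) = id from rfl, Measure.map_id]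

lemma rhoG_smul (r : ℝ) :
    rhoG r = (ENNReal.ofReal (cr r)⁻¹) • (volume.restrict (Icc (0:ℝ) r)) :=
  withDensity_const _

lemma fst_nuR (r : ℝ) : (nuR r).map Prod.fst = rhoG r := by
  rw [nuR_eq, Measure.map_map measurable_fst (measurable_graph r),
    show (Prod.fst ∘ fun s : ℝ => (s, tent r s)) = id from rfl, Measure.map_id]

lemma snd_nuR {r : ℝ} (hr : 0 < r) : (nuR r).map Prod.snd = rhoG r := by
  rw [nuR_eq, Measure.map_map measurable_snd (measurable_graph r),
    show (Prod.snd ∘ fun s : ℝ => (s, tent r s)) = tent r from rfl,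
    rhoG_smul, Measure.map_smul, tent_map_volume hr]

lemma restrict_Icc_fin (r : ℝ) : (volume.restrict (Icc (0:ℝ) r)) univ ≠ ⊤ := by
  rw [Measure.restrict_apply_univ, Real.volume_Icc]
  exact ENNReal.ofReal_ne_top

lemma rhoD_fin {r : ℝ} (hr : r ∈ Ioo (0:ℝ) 1) : rhoD r univ ≠ ⊤ := by
  obtain ⟨hr0, hr1⟩ := hr
  have hcpos := cr_pos ⟨hr0, hr1⟩
  rw [rhoD, withDensity_apply _ MeasurableSet.univ, Measure.restrict_univ]
  have hbd : ∫⁻ x, ENNReal.ofReal ((cr r)⁻¹ * (x / (1 - x))) ∂(volume.restrict (Icc (0:ℝ) r))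
      ≤ ∫⁻ _x, ENNReal.ofReal ((cr r)⁻¹ * (r / (1 - r))) ∂(volume.restrict (Icc (0:ℝ) r)) := by
    apply lintegral_mono_ae
    filter_upwards [ae_restrict_mem measurableSet_Icc] with x hx
    apply ENNReal.ofReal_le_ofReal
    apply mul_le_mul_of_nonneg_left _ (inv_nonneg.mpr hcpos.le)
    exact div_le_div₀ hr0.le hx.2 (by linarith) (by linarith [hx.2])
  refine ne_top_of_le_ne_top ?_ hbd
  rw [lintegral_const]
  exact ENNReal.mul_ne_top ENNReal.ofReal_ne_top (restrict_Icc_fin r)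

lemma rhoG_fin (r : ℝ) : rhoG r univ ≠ ⊤ := by
  rw [rhoG_smul, Measure.smul_apply, smul_eq_mul]
  exact ENNReal.mul_ne_top ENNReal.ofReal_ne_top (restrict_Icc_fin r)

/-- the core computation: `∫_A x d(ρΔ + ρΓ) = ρΔ(A)`. -/
lemma core_integral {r : ℝ} (hr : r ∈ Ioo (0:ℝ) 1) {A : Set ℝ} (hA : MeasurableSet A) :
    ∫⁻ x in A, ENNReal.ofReal x ∂(rhoD r + rhoG r) = rhoD r A := by
  obtain ⟨hr0, hr1⟩ := hr
  have hcpos := cr_pos ⟨hr0, hr1⟩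
  have hofReal_meas : Measurable (fun x : ℝ => ENNReal.ofReal x) := ENNReal.measurable_ofReal
  rw [Measure.restrict_add, lintegral_add_measure, rhoD, rhoG,
    restrict_withDensity hA, restrict_withDensity hA,
    lintegral_withDensity_eq_lintegral_mul _ (measurable_densD r) hofReal_meas,
    lintegral_withDensity_eq_lintegral_mul _ measurable_const hofReal_meas]
  simp only [Pi.mul_apply]
  rw [← lintegral_add_left (f := fun a => ENNReal.ofReal ((cr r)⁻¹ * (a / (1 - a))) * ENNReal.ofReal a) ((measurable_densD r).mul hofReal_meas)]
  have hptw : ∀ᵐ x ∂((volume.restrict (Icc (0:ℝ) r)).restrict A),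
      ENNReal.ofReal ((cr r)⁻¹ * (x / (1 - x))) * ENNReal.ofReal x
        + ENNReal.ofReal (cr r)⁻¹ * ENNReal.ofReal x
      = ENNReal.ofReal ((cr r)⁻¹ * (x / (1 - x))) := by
    refine ae_restrict_of_ae ?_
    filter_upwards [ae_restrict_mem measurableSet_Icc] with x hx
    have hx0 : 0 ≤ x := hx.1
    have hxr : x ≤ r := hx.2
    have h1x : (0:ℝ) < 1 - x := by linarith
    rw [← ENNReal.ofReal_mul (mul_nonneg (inv_nonneg.mpr hcpos.le) (div_nonneg hx0 h1x.le)),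
      ← ENNReal.ofReal_mul (inv_nonneg.mpr hcpos.le),
      ← ENNReal.ofReal_add (by positivity) (by positivity)]
    congr 1
    field_simp
    ring
  rw [lintegral_congr_ae hptw]
  exact (withDensity_apply _ hA).symm

/-- the representation `(μ_r, ν_r)` of `m_r` is unique. -/
theorem muR_nuR_unique (r : ℝ) (hr : r ∈ Ioo (0:ℝ) 1)
    (μ' ν' : Measure (ℝ × ℝ)) (h : MemR μ' ν')
    (heq : μ' + ν' = muR r + nuR r) :
    μ' = muR r ∧ ν' = nuR r := by
  obtain ⟨hr0, hr1⟩ := hr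
  -- a.e. boundedness of marginals of μ'
  have hsupp_fst : ∀ᵐ x ∂(μ'.map Prod.fst), x ∈ Icc (0:ℝ) 1 := by
    rw [ae_iff]
    have : {x : ℝ | ¬ x ∈ Icc (0:ℝ) 1} = (Icc (0:ℝ) 1)ᶜ := rfl
    rw [this, Measure.map_apply measurable_fst measurableSet_Icc.compl]
    refine measure_mono_null ?_ h.supp_mu
    intro p hp hmem
    exact hp hmem.1
  have hsupp_snd : ∀ᵐ y ∂(μ'.map Prod.snd), y ∈ Icc (0:ℝ) 1 := by
    rw [ae_iff]
    have : {x : ℝ | ¬ x ∈ Icc (0:ℝ) 1} = (Icc (0:ℝ) 1)ᶜ := rfl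
    rw [this, Measure.map_apply measurable_snd measurableSet_Icc.compl]
    refine measure_mono_null ?_ h.supp_mu
    intro p hp hmem
    exact hp hmem.2
  -- the two marginal identities
  have hmarg : ∀ (f : ℝ × ℝ → ℝ), Measurable f →
      (∀ᵐ x ∂(μ'.map f), x ∈ Icc (0:ℝ) 1) →
      (∀ A : Set ℝ, MeasurableSet A →
        ∫⁻ x in A, ENNReal.ofReal (1 - x) ∂(μ'.map f) =
          ∫⁻ x in A, ENNReal.ofReal x ∂(ν'.map f)) →
      ((muR r + nuR r).map f = (muR r).map f + (nuR r).map f) →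
      ((muR r).map f + (nuR r).map f = rhoD r + rhoG r) →
      μ'.map f = rhoD r := by
    intro f hf hae heqf hmapadd hmargsum
    ext A hA
    have e1 : ∫⁻ x in A, (ENNReal.ofReal (1 - x) + ENNReal.ofReal x) ∂(μ'.map f)
        = (μ'.map f) A := by
      rw [← setLIntegral_one]
      apply lintegral_congr_ae
      filter_upwards [ae_restrict_of_ae hae] with x hx
      rw [← ENNReal.ofReal_add (by linarith [hx.2] : (0:ℝ) ≤ 1 - x) hx.1]
      norm_num
    have e2 : ∫⁻ x in A, (ENNReal.ofReal (1 - x) + ENNReal.ofReal x) ∂(μ'.map f)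
        = ∫⁻ x in A, ENNReal.ofReal (1 - x) ∂(μ'.map f)
          + ∫⁻ x in A, ENNReal.ofReal x ∂(μ'.map f) :=
      lintegral_add_left ((measurable_const.sub measurable_id).ennreal_ofReal) _
    calc (μ'.map f) A
        = ∫⁻ x in A, ENNReal.ofReal (1 - x) ∂(μ'.map f)
          + ∫⁻ x in A, ENNReal.ofReal x ∂(μ'.map f) := by rw [← e1, e2]
      _ = ∫⁻ x in A, ENNReal.ofReal x ∂(ν'.map f)
          + ∫⁻ x in A, ENNReal.ofReal x ∂(μ'.map f) := by rw [heqf A hA]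
      _ = ∫⁻ x in A, ENNReal.ofReal x ∂(μ'.map f + ν'.map f) := by
          rw [Measure.restrict_add, lintegral_add_measure, add_comm]
      _ = ∫⁻ x in A, ENNReal.ofReal x ∂(rhoD r + rhoG r) := by
          rw [← Measure.map_add _ _ hf, heq, hmapadd, hmargsum]
      _ = rhoD r A := core_integral ⟨hr0, hr1⟩ hA
  have hfst_mu' : μ'.map Prod.fst = rhoD r :=
    hmarg Prod.fst measurable_fst hsupp_fst h.eq_x
      (Measure.map_add _ _ measurable_fst) (by rw [fst_muR, fst_nuR])
  have hsnd_mu' : μ'.map Prod.snd = rhoD r :=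
    hmarg Prod.snd measurable_snd hsupp_snd h.eq_y
      (Measure.map_add _ _ measurable_snd) (by rw [snd_muR, snd_nuR hr0])
  -- decomposition of μ' along the diagonal
  set Δ : Set (ℝ × ℝ) := {p : ℝ × ℝ | p.1 = p.2} with hΔ_def
  have hΔ : MeasurableSet Δ := measurableSet_eq_fun measurable_fst measurable_snd
  set Γ : Set (ℝ × ℝ) := {p : ℝ × ℝ | p.2 = tent r p.1} with hΓ_def
  have hΓ : MeasurableSet Γ :=
    measurableSet_eq_fun measurable_snd ((measurable_tent r).comp measurable_fst)
  set α : Measure (ℝ × ℝ) := μ'.restrict Δ with hα_def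
  set β : Measure (ℝ × ℝ) := μ'.restrict Δᶜ with hβ_def
  have hαβ : α + β = μ' := Measure.restrict_add_restrict_compl hΔ
  have hμ'_le : μ' ≤ muR r + nuR r := by
    rw [← heq]
    intro s
    simp only [Measure.coe_add, Pi.add_apply]
    exact le_self_add
  have hmuΔc : (muR r) Δᶜ = 0 := by
    rw [muR_eq, Measure.map_apply measurable_diagR hΔ.compl]
    convert measure_empty (μ := rhoD r)
    ext s
    simp [hΔ_def]
  have hnuΔ : (nuR r) Δ = 0 := by
    rw [nuR_eq, Measure.map_apply (measurable_graph r) hΔ]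
    have hsub : (fun s : ℝ => (s, tent r s)) ⁻¹' Δ ⊆ {0, 2*r/3} := by
      intro s hs
      simp only [hΔ_def, mem_preimage, mem_setOf_eq] at hs
      simp only [tent] at hs
      rcases min_cases s (r - s) with ⟨hmin, _⟩ | ⟨hmin, _⟩ <;> rw [hmin] at hs
      · left
        linarith
      · right
        simp only [mem_singleton_iff]
        linarith
    refine measure_mono_null hsub ?_
    apply (withDensity_absolutelyContinuous _ _)
    refine measure_mono_null (fun x hx => hx) ?_
    rw [Measure.restrict_apply₀' measurableSet_Icc.nullMeasurableSet]
    exact measure_mono_null (inter_subset_left)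
      ((Set.toFinite {0, 2*r/3}).measure_zero volume)
  have hnuΓc : (nuR r) Γᶜ = 0 := by
    rw [nuR_eq, Measure.map_apply (measurable_graph r) hΓ.compl]
    convert measure_empty (μ := rhoG r)
    ext s
    simp [hΓ_def]
  have hβ_le_nuR : β ≤ nuR r := by
    rw [Measure.le_iff]
    intro A hA
    rw [hβ_def, Measure.restrict_apply hA]
    calc μ' (A ∩ Δᶜ) ≤ (muR r + nuR r) (A ∩ Δᶜ) :=
          Measure.le_iff.mp hμ'_le _ (hA.inter hΔ.compl)
      _ = muR r (A ∩ Δᶜ) + nuR r (A ∩ Δᶜ) := rfl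
      _ ≤ muR r Δᶜ + nuR r A := by
          gcongr
          · exact inter_subset_right
          · exact inter_subset_left
      _ = nuR r A := by rw [hmuΔc, zero_add]
  have hα_le_muR : α ≤ muR r := by
    rw [Measure.le_iff]
    intro A hA
    rw [hα_def, Measure.restrict_apply hA]
    calc μ' (A ∩ Δ) ≤ (muR r + nuR r) (A ∩ Δ) :=
          Measure.le_iff.mp hμ'_le _ (hA.inter hΔ)
      _ = muR r (A ∩ Δ) + nuR r (A ∩ Δ) := rfl
      _ ≤ muR r A + nuR r Δ := by
          gcongr
          · exact inter_subset_left
          · exact inter_subset_right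
      _ = muR r A := by rw [hnuΔ, add_zero]
  have hβΓc : β Γᶜ = 0 := le_antisymm (by
      calc β Γᶜ ≤ nuR r Γᶜ := Measure.le_iff.mp hβ_le_nuR _ hΓ.compl
        _ = 0 := hnuΓc) zero_le
  -- marginals of α and β
  have hα_snd_fst : α.map Prod.snd = α.map Prod.fst := by
    apply Measure.map_congr
    rw [Filter.EventuallyEq, ae_iff]
    have hsub : {p : ℝ × ℝ | ¬ p.2 = p.1} ⊆ Δᶜ := by
      intro p hp hmem
      exact hp hmem.symm
    refine measure_mono_null hsub ?_
    rw [hα_def, Measure.restrict_apply hΔ.compl]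
    simp
  have hβ_snd : β.map Prod.snd = Measure.map (tent r) (β.map Prod.fst) := by
    rw [Measure.map_map (measurable_tent r) measurable_fst]
    apply Measure.map_congr
    rw [Filter.EventuallyEq, ae_iff]
    refine measure_mono_null (fun p hp => hp) hβΓc
  set σ : Measure ℝ := β.map Prod.fst with hσ_def
  set τ : Measure ℝ := α.map Prod.fst with hτ_def
  have eqn1 : τ + σ = rhoD r := by
    rw [hτ_def, hσ_def, ← Measure.map_add _ _ measurable_fst, hαβ, hfst_mu']
  have eqn2 : τ + Measure.map (tent r) σ = rhoD r := by
    have : μ'.map Prod.snd = α.map Prod.snd + β.map Prod.snd := by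
      rw [← Measure.map_add _ _ measurable_snd, hαβ]
    rw [← hsnd_mu', this, hα_snd_fst, hβ_snd]
  have hτ_fin : ∀ s, τ s ≠ ⊤ := by
    intro s
    refine ne_top_of_le_ne_top h.fin_mu ?_
    calc τ s ≤ τ univ := measure_mono (subset_univ s)
      _ = α univ := by rw [hτ_def, Measure.map_apply measurable_fst MeasurableSet.univ,
            preimage_univ]
      _ ≤ μ' univ := by
          rw [hα_def]
          exact Measure.restrict_le_self _
  have hσ_inv : Measure.map (tent r) σ = σ :=
    Measure.add_left_cancel' hτ_fin (eqn2.trans eqn1.symm)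
  have hσ_le_ρΓ : σ ≤ rhoG r := by
    rw [hσ_def, ← fst_nuR]
    exact Measure.map_mono hβ_le_nuR measurable_fst
  have hσ_le_ρΔ : σ ≤ rhoD r := by
    rw [← eqn1]
    intro s
    simp only [Measure.coe_add, Pi.add_apply]
    exact le_add_self
  haveI : IsFiniteMeasure σ := by
    constructor
    rw [lt_top_iff_ne_top]
    exact ne_top_of_le_ne_top (rhoG_fin r) (Measure.le_iff.mp hσ_le_ρΓ _ MeasurableSet.univ)
  have hσ0 : σ = 0 := invariant_null ⟨hr0, hr1⟩ σ hσ_inv hσ_le_ρΓ hσ_le_ρΔ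
  have hβ0 : β = 0 := by
    rw [← Measure.measure_univ_eq_zero]
    have : β univ = σ univ := by
      rw [hσ_def, Measure.map_apply measurable_fst MeasurableSet.univ, preimage_univ]
    rw [this, hσ0]
    simp
  have hτρ : τ = rhoD r := by rw [← eqn1, hσ0, add_zero]
  have hα_univ : α univ = rhoD r univ := by
    rw [← hτρ, hτ_def, Measure.map_apply measurable_fst MeasurableSet.univ, preimage_univ]
  have hmuR_univ : (muR r) univ = rhoD r univ := by
    rw [muR_eq, Measure.map_apply measurable_diagR MeasurableSet.univ, preimage_univ]
  have hα_eq : α = muR r := by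
    refine Measure.eq_of_le_of_univ_le hα_le_muR ?_ ?_
    · rw [hmuR_univ]; exact rhoD_fin ⟨hr0, hr1⟩
    · rw [hmuR_univ, ← hα_univ]
  have hμ'_eq : μ' = muR r := by
    rw [← hαβ, hβ0, add_zero, hα_eq]
  refine ⟨hμ'_eq, ?_⟩
  have h2 : muR r + ν' = muR r + nuR r := by
    conv_lhs => rw [← hμ'_eq]
    exact heq
  refine Measure.add_left_cancel' ?_ h2
  intro s
  refine ne_top_of_le_ne_top ?_ (measure_mono (subset_univ s))
  rw [hmuR_univ]
  exact rhoD_fin ⟨hr0, hr1⟩
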